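/- arXiv:1909.05589 — 2 statements merged into one kernel-verified Lean document; each statement's English description precedes it below -/
import Mathlib

section
/- For every real b > 0 and every positive integer p, Σ_{i=1}^p Σ_{j=i}^∞ 1/(2j+b)^2 = (1/4) ψ(b/2 + p + 1) - (1/4) ψ(b/2 + 1) - (b/8) ψ'(b/2 + 1) + (p/4 + b/8) ψ'(b/2 + p + 1). -/
open Real Filter Topology Finset

lemma log_one_add_le {u : ℝ} (hu : 0 ≤ u) : Real.log (1 + u) ≤ u := by
  have := Real.log_le_sub_one_of_pos (by linarith : (0:ℝ) < 1 + u)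
  linarith

lemma le_log_one_add {u : ℝ} (hu : 0 ≤ u) : u - u ^ 2 ≤ Real.log (1 + u) := by
  have h1 : (0:ℝ) < 1 + u := by linarith
  have h2 := Real.log_le_sub_one_of_pos (inv_pos.mpr h1)
  rw [Real.log_inv] at h2
  have h3 : (1 + u)⁻¹ ≤ 1 - u + u ^ 2 := by
    rw [inv_le_iff_one_le_mul₀ h1]
    nlinarith
  linarith

lemma log_sub_log {c : ℝ} (hc : 0 < c) (x : ℝ) (hx : 0 ≤ x) :
    Real.log (x + c) - Real.log c = Real.log (1 + x / c) := by
  rw [← Real.log_div (by positivity) hc.ne']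
  congr 1
  field_simp
  ring

/-- Term of the Weierstrass-type series for `log Γ x + log x`. -/
noncomputable def wterm (m : ℕ) (x : ℝ) : ℝ :=
  x * (Real.log ((m : ℝ) + 2) - Real.log ((m : ℝ) + 1))
    - Real.log (x + ((m : ℝ) + 1)) + Real.log ((m : ℝ) + 1)

/-- Derivative of `wterm m`. -/
noncomputable def wterm1 (m : ℕ) (x : ℝ) : ℝ :=
  (Real.log ((m : ℝ) + 2) - Real.log ((m : ℝ) + 1)) - 1 / (x + ((m : ℝ) + 1))

lemma wterm_abs_le {m : ℕ} {x : ℝ} (hx : 0 ≤ x) :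
    |wterm m x| ≤ (x + x ^ 2) * (1 / ((m : ℝ) + 1) ^ 2) := by
  set c : ℝ := (m : ℝ) + 1 with hc
  have hc0 : (0:ℝ) < c := by positivity
  have hc1 : (1:ℝ) ≤ c := by simp [hc]
  have e1 : Real.log (c + 1) - Real.log c = Real.log (1 + 1 / c) := by
    have := log_sub_log hc0 1 (by norm_num)
    rw [← this]; ring_nf
  have e2 : Real.log (x + c) - Real.log c = Real.log (1 + x / c) := log_sub_log hc0 x hx
  have hwt : wterm m x = x * Real.log (1 + 1 / c) - Real.log (1 + x / c) := by
    rw [wterm, ← e1, ← e2]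
    have : (m : ℝ) + 2 = c + 1 := by rw [hc]; ring
    rw [this]; ring
  set d : ℝ := 1 / c with hd
  have hd0 : 0 < d := by positivity
  have hd1 : d ≤ 1 := by rw [hd]; rw [div_le_one hc0]; linarith
  have hxc : x / c = x * d := by rw [hd]; ring
  have b1 : Real.log (1 + 1 / c) ≤ d := by simpa [hd] using log_one_add_le hd0.le
  have b2 : d - d ^ 2 ≤ Real.log (1 + 1 / c) := by simpa [hd] using le_log_one_add hd0.le
  have hxd0 : 0 ≤ x * d := by positivity
  have b3 : Real.log (1 + x / c) ≤ x * d := by rw [hxc]; exact log_one_add_le hxd0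
  have b4 : x * d - (x * d) ^ 2 ≤ Real.log (1 + x / c) := by rw [hxc]; exact le_log_one_add hxd0
  rw [hwt, abs_le]
  have hgoal : (x + x ^ 2) * (1 / c ^ 2) = (x + x ^ 2) * d ^ 2 := by
    rw [hd, div_pow, one_pow]
  constructor
  · rw [hgoal]; nlinarith [mul_le_mul_of_nonneg_left b2 hx, sq_nonneg d, sq_nonneg (x*d)]
  · rw [hgoal]; nlinarith [mul_le_mul_of_nonneg_left b1 hx, sq_nonneg d, sq_nonneg (x*d)]

lemma summable_aux : Summable (fun m : ℕ => 1 / ((m : ℝ) + 1) ^ 2) := by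
  have h := Real.summable_one_div_nat_pow.mpr (by norm_num : 1 < 2)
  have := (_root_.summable_nat_add_iff (f := fun n : ℕ => 1 / (n : ℝ) ^ 2) 1).mpr h
  simpa [Nat.cast_add] using this

lemma wterm_summable {x : ℝ} (hx : 0 ≤ x) : Summable (fun m => wterm m x) := by
  apply Summable.of_abs
  apply Summable.of_nonneg_of_le (fun m => abs_nonneg _) (fun m => wterm_abs_le hx)
  exact (summable_aux.mul_left _)

lemma wterm_hasSum {x : ℝ} (hx : 0 < x) :
    HasSum (fun m => wterm m x) (Real.log (Real.Gamma x) + Real.log x) := by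
  have hs := wterm_summable (x := x) hx.le
  rw [hs.hasSum_iff_tendsto_nat]
  have key : ∀ n : ℕ, 1 ≤ n → ∑ m ∈ Finset.range n, wterm m x
      = Real.BohrMollerup.logGammaSeq x n + Real.log x
        + x * (Real.log ((n : ℝ) + 1) - Real.log n) := by
    intro n hn
    have hs1 : ∑ m ∈ Finset.range n, (Real.log ((m:ℝ)+2) - Real.log ((m:ℝ)+1))
        = Real.log ((n:ℝ)+1) := by
      have h := Finset.sum_range_sub (fun i : ℕ => Real.log ((i:ℝ)+1)) n
      calc ∑ m ∈ Finset.range n, (Real.log ((m:ℝ)+2) - Real.log ((m:ℝ)+1))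
          = ∑ i ∈ Finset.range n, (Real.log (((i+1 : ℕ):ℝ)+1) - Real.log ((i:ℝ)+1)) := by
            apply Finset.sum_congr rfl
            intro m _
            push_cast
            ring_nf
        _ = Real.log ((n:ℝ)+1) := by rw [h]; norm_num
    have hs2 : ∑ m ∈ Finset.range n, Real.log ((m:ℝ)+1) = Real.log ((Nat.factorial n : ℕ) : ℝ) := by
      rw [← Real.log_prod (s := Finset.range n) (f := fun m : ℕ => (m:ℝ)+1) (fun m _ => by positivity)]
      congr 1
      rw [← Finset.prod_range_add_one_eq_factorial]
      push_cast
      rfl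
    have hs3 : ∑ m ∈ Finset.range (n+1), Real.log (x + (m:ℝ))
        = ∑ m ∈ Finset.range n, Real.log (x + ((m:ℝ)+1)) + Real.log x := by
      rw [Finset.sum_range_succ' (fun i : ℕ => Real.log (x + (i:ℝ))) n]
      push_cast
      simp
    have hsum : ∑ m ∈ Finset.range n, wterm m x
        = x * Real.log ((n:ℝ)+1)
          - ∑ m ∈ Finset.range n, Real.log (x + ((m:ℝ)+1)) + Real.log ((Nat.factorial n : ℕ) : ℝ) := by
      simp only [wterm]
      rw [Finset.sum_add_distrib, Finset.sum_sub_distrib, ← Finset.mul_sum, hs1, hs2]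
    rw [hsum, Real.BohrMollerup.logGammaSeq]
    rw [hs3]
    ring
  have hlim : Tendsto (fun n : ℕ => Real.BohrMollerup.logGammaSeq x n + Real.log x
      + x * (Real.log ((n : ℝ) + 1) - Real.log n)) atTop
      (𝓝 (Real.log (Real.Gamma x) + Real.log x)) := by
    have h1 := Real.BohrMollerup.tendsto_log_gamma hx
    have h2 := Real.tendsto_log_nat_add_one_sub_log.const_mul x
    have h3 := (h1.add_const (Real.log x)).add h2
    simpa using h3
  exact hlim.congr' (by filter_upwards [eventually_ge_atTop 1] with n hn using (key n hn).symm)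

lemma wterm_hasDerivAt (m : ℕ) {x : ℝ} (hx : 0 < x) :
    HasDerivAt (wterm m) (wterm1 m x) x := by
  have hc : (0:ℝ) < x + ((m:ℝ)+1) := by positivity
  have h1 : HasDerivAt (fun y : ℝ => Real.log (y + ((m:ℝ)+1))) (1/(x + ((m:ℝ)+1))) x := by
    have := ((hasDerivAt_id x).add_const ((m:ℝ)+1)).log hc.ne'
    simpa using this
  have h2 : HasDerivAt (fun y : ℝ => y * (Real.log ((m:ℝ)+2) - Real.log ((m:ℝ)+1)))
      (Real.log ((m:ℝ)+2) - Real.log ((m:ℝ)+1)) x := by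
    simpa using (hasDerivAt_id x).mul_const (Real.log ((m:ℝ)+2) - Real.log ((m:ℝ)+1))
  have h3 := (h2.sub h1).add_const (Real.log ((m:ℝ)+1))
  exact h3

lemma wterm1_abs_le {m : ℕ} {x A : ℝ} (hx : 0 < x) (hA : x ≤ A) :
    |wterm1 m x| ≤ (1 + A) * (1 / ((m : ℝ) + 1) ^ 2) := by
  set c : ℝ := (m : ℝ) + 1 with hc
  have hc0 : (0:ℝ) < c := by positivity
  have e1 : Real.log (c + 1) - Real.log c = Real.log (1 + 1 / c) := by
    have := log_sub_log hc0 1 (by norm_num)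
    rw [← this]; ring_nf
  have hw : wterm1 m x = Real.log (1 + 1/c) - 1/(x + c) := by
    have h2 : (m : ℝ) + 2 = c + 1 := by rw [hc]; ring
    simp only [wterm1, h2, ← hc, e1]
  set d : ℝ := 1 / c with hd
  have hd0 : 0 < d := by positivity
  set e : ℝ := 1 / (x + c) with he
  have he0 : 0 < e := by positivity
  have hed : e ≤ d := by
    rw [he, hd]
    apply one_div_le_one_div_of_le hc0
    linarith
  have hde : d - e = x * (d * e) := by
    rw [hd, he]
    field_simp
    ring
  have b1 : Real.log (1 + d) ≤ d := log_one_add_le hd0.le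
  have b2 : d - d ^ 2 ≤ Real.log (1 + d) := le_log_one_add hd0.le
  have hA0 : 0 < A := lt_of_lt_of_le hx hA
  have hgoal : (1 + A) * (1 / c ^ 2) = (1 + A) * d ^ 2 := by
    rw [hd, div_pow, one_pow]
  have k1 : x * (d * e) ≤ A * (d * d) :=
    mul_le_mul hA (mul_le_mul_of_nonneg_left hed hd0.le) (by positivity) hA0.le
  rw [hw, hgoal, abs_le]
  constructor
  · nlinarith [sq_nonneg d]
  · nlinarith [sq_nonneg d]

lemma hasDerivAt_logGamma {x : ℝ} (hx : 0 < x) :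
    HasDerivAt (fun y => Real.log (Real.Gamma y)) (-x⁻¹ + ∑' m : ℕ, wterm1 m x) x := by
  set A := x + 1 with hA
  have hmem : x ∈ Set.Ioo (0:ℝ) A := ⟨hx, by rw [hA]; linarith⟩
  have hder : HasDerivAt (fun z => ∑' m : ℕ, wterm m z) (∑' m : ℕ, wterm1 m x) x := by
    refine hasDerivAt_tsum_of_isPreconnected (summable_aux.mul_left (1 + A)) isOpen_Ioo
      isPreconnected_Ioo (fun m y hy => wterm_hasDerivAt m hy.1)
      (fun m y hy => ?_) hmem (wterm_hasSum hx).summable hmem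
    rw [Real.norm_eq_abs]
    exact wterm1_abs_le hy.1 hy.2.le
  have hlog : HasDerivAt (fun y : ℝ => -Real.log y) (-x⁻¹) x := (Real.hasDerivAt_log hx.ne').neg
  have h := hlog.add hder
  apply h.congr_of_eventuallyEq
  filter_upwards [isOpen_Ioi.mem_nhds (hx : x ∈ Set.Ioi 0)] with y hy
  simp only [Pi.add_apply]
  rw [(wterm_hasSum hy).tsum_eq]
  ring

lemma digamma_eq' {x : ℝ} (hx : 0 < x) :
    deriv (fun y => Real.log (Real.Gamma y)) x = -x⁻¹ + ∑' m : ℕ, wterm1 m x :=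
  (hasDerivAt_logGamma hx).deriv

lemma wterm1_hasDerivAt (m : ℕ) {x : ℝ} (hx : 0 < x) :
    HasDerivAt (wterm1 m) (1 / (x + ((m:ℝ)+1)) ^ 2) x := by
  have hc : (0:ℝ) < x + ((m:ℝ)+1) := by positivity
  have h1 : HasDerivAt (fun y : ℝ => (y + ((m:ℝ)+1))⁻¹) (-1/(x + ((m:ℝ)+1))^2) x := by
    have := ((hasDerivAt_id x).add_const ((m:ℝ)+1)).inv hc.ne'
    exact this
  have h2 := h1.const_sub (Real.log ((m:ℝ)+2) - Real.log ((m:ℝ)+1))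
  show HasDerivAt (fun y => (Real.log ((m:ℝ)+2) - Real.log ((m:ℝ)+1)) - 1/(y + ((m:ℝ)+1))) _ x
  simpa [one_div, neg_div] using h2

lemma sq_bound {m : ℕ} {x : ℝ} (hx : 0 < x) :
    |1 / (x + ((m:ℝ)+1)) ^ 2| ≤ 1 / ((m:ℝ)+1) ^ 2 := by
  have h1 : (0:ℝ) < (m:ℝ)+1 := by positivity
  rw [abs_of_pos (by positivity)]
  apply one_div_le_one_div_of_le (by positivity)
  nlinarith

lemma wterm1_summable {x : ℝ} (hx : 0 < x) : Summable (fun m => wterm1 m x) := by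
  apply Summable.of_abs
  apply Summable.of_nonneg_of_le (fun m => abs_nonneg _)
    (fun m => wterm1_abs_le hx (le_refl x))
  exact summable_aux.mul_left _

lemma summable_inv_sq {x : ℝ} (hx : 0 < x) :
    Summable (fun k : ℕ => 1 / (x + (k:ℝ)) ^ 2) := by
  rw [← summable_nat_add_iff 1]
  apply Summable.of_nonneg_of_le (fun k => by positivity) (fun k => ?_) summable_aux
  push_cast
  rw [div_le_div_iff₀ (by positivity) (by positivity)]
  nlinarith [sq_nonneg x, mul_nonneg hx.le (Nat.cast_nonneg k : (0:ℝ) ≤ (k:ℝ))]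

lemma hasDerivAt_digamma {x : ℝ} (hx : 0 < x) :
    HasDerivAt (fun y => deriv (fun z => Real.log (Real.Gamma z)) y)
      (∑' k : ℕ, 1 / (x + (k:ℝ)) ^ 2) x := by
  set A := x + 1 with hA
  have hmem : x ∈ Set.Ioo (0:ℝ) A := ⟨hx, by rw [hA]; linarith⟩
  have hder : HasDerivAt (fun z => ∑' m : ℕ, wterm1 m z)
      (∑' m : ℕ, 1 / (x + ((m:ℝ)+1)) ^ 2) x := by
    refine hasDerivAt_tsum_of_isPreconnected summable_aux isOpen_Ioo
      isPreconnected_Ioo (fun m y hy => wterm1_hasDerivAt m hy.1)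
      (fun m y hy => ?_) hmem (wterm1_summable hx) hmem
    rw [Real.norm_eq_abs]
    exact sq_bound hy.1
  have hinv : HasDerivAt (fun y : ℝ => -y⁻¹) ((x^2)⁻¹) x := by
    have := (hasDerivAt_inv hx.ne').neg; rw [neg_neg] at this; exact this
  have h := hinv.add hder
  have hval : (∑' k : ℕ, 1 / (x + (k:ℝ)) ^ 2)
      = (x^2)⁻¹ + ∑' m : ℕ, 1 / (x + ((m:ℝ)+1)) ^ 2 := by
    rw [Summable.tsum_eq_zero_add (summable_inv_sq hx)]
    have h0 : ∀ k : ℕ, 1 / (x + ((k:ℕ)+1 : ℕ) : ℝ) ^ 2 = 1 / (x + ((k:ℝ)+1)) ^ 2 := by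
      intro k; push_cast; ring_nf
    norm_num [h0]
  rw [hval]
  apply h.congr_of_eventuallyEq
  filter_upwards [isOpen_Ioi.mem_nhds (hx : x ∈ Set.Ioi 0)] with y hy
  rw [digamma_eq' hy]
  rfl

/-- The digamma function `ψ(x) = Γ'(x)/Γ(x)`, as the derivative of `log ∘ Γ`. -/
noncomputable def digamma (x : ℝ) : ℝ :=
  deriv (fun y => Real.log (Real.Gamma y)) x

lemma trigamma_eq {x : ℝ} (hx : 0 < x) :
    deriv digamma x = ∑' k : ℕ, 1 / (x + (k:ℝ)) ^ 2 :=
  (hasDerivAt_digamma hx).deriv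

lemma digamma_add_one {x : ℝ} (hx : 0 < x) : digamma (x + 1) = digamma x + 1 / x := by
  have hx1 : (0:ℝ) < x + 1 := by linarith
  have h1 : HasDerivAt (fun y : ℝ => Real.log (Real.Gamma (y + 1))) (digamma (x + 1)) x := by
    have hcomp := (hasDerivAt_logGamma hx1).comp x ((hasDerivAt_id x).add_const 1)
    have hd : digamma (x + 1) = -(x+1)⁻¹ + ∑' m : ℕ, wterm1 m (x+1) := digamma_eq' hx1
    rw [hd]
    simpa [Function.comp_def] using hcomp
  have h2 : HasDerivAt (fun y : ℝ => Real.log (Real.Gamma (y + 1))) (digamma x + 1 / x) x := by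
    have hg : HasDerivAt (fun y : ℝ => Real.log y + Real.log (Real.Gamma y))
        (x⁻¹ + (-x⁻¹ + ∑' m : ℕ, wterm1 m x)) x :=
      (Real.hasDerivAt_log hx.ne').add (hasDerivAt_logGamma hx)
    have heq : (fun y : ℝ => Real.log (Real.Gamma (y + 1)))
        =ᶠ[𝓝 x] (fun y => Real.log y + Real.log (Real.Gamma y)) := by
      filter_upwards [isOpen_Ioi.mem_nhds (hx : x ∈ Set.Ioi 0)] with y hy
      rw [Real.Gamma_add_one (ne_of_gt hy),
        Real.log_mul (ne_of_gt hy) (Real.Gamma_pos_of_pos hy).ne']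
    have h3 := hg.congr_of_eventuallyEq heq
    have hd : digamma x = -x⁻¹ + ∑' m : ℕ, wterm1 m x := digamma_eq' hx
    rw [hd, one_div]
    refine h3.congr_deriv ?_
    ring
  exact h1.unique h2

lemma trigamma_add_one {x : ℝ} (hx : 0 < x) :
    deriv digamma (x + 1) = deriv digamma x - 1 / x ^ 2 := by
  rw [trigamma_eq hx, trigamma_eq (by linarith : (0:ℝ) < x + 1)]
  rw [Summable.tsum_eq_zero_add (summable_inv_sq hx)]
  have h : ∀ k : ℕ, 1 / (x + ((k+1:ℕ) : ℝ)) ^ 2 = 1 / ((x+1) + (k:ℝ)) ^ 2 := by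
    intro k; push_cast; ring_nf
  rw [tsum_congr h]
  norm_num

lemma key_sum {x : ℝ} (hx : 0 < x) (p : ℕ) :
    ∑ i ∈ Finset.Icc 1 p, deriv digamma (x + (i:ℝ))
      = digamma (x + (p:ℝ) + 1) - digamma (x + 1) - x * deriv digamma (x + 1)
        + ((p : ℝ) + x) * deriv digamma (x + (p:ℝ) + 1) := by
  induction p with
  | zero => simp
  | succ n ih =>
    rw [Finset.sum_Icc_succ_top (by omega : 1 ≤ n + 1), ih]
    have hy : (0:ℝ) < x + (n:ℝ) + 1 := by positivity
    have e1 := digamma_add_one hy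
    have e2 := trigamma_add_one hy
    push_cast
    rw [show x + ((n:ℝ) + 1) + 1 = x + (n:ℝ) + 1 + 1 from by ring,
      show x + ((n:ℝ) + 1) = x + (n:ℝ) + 1 from by ring, e1, e2]
    field_simp
    ring

/-- Closed form for the double sum `∑_{i=1}^p ∑_{j=i}^∞ 1/(2j+b)²` in terms of the
digamma function `ψ` and the trigamma function `ψ' = deriv digamma`. -/
theorem double_sum_trigamma (b : ℝ) (hb : 0 < b) (p : ℕ) (hp : 1 ≤ p) :
    ∑ i ∈ Finset.Icc 1 p, ∑' k : ℕ, 1 / (2 * ((i : ℝ) + (k : ℝ)) + b) ^ 2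
      = (1 / 4) * digamma (b / 2 + p + 1) - (1 / 4) * digamma (b / 2 + 1)
        - (b / 8) * deriv digamma (b / 2 + 1)
        + ((p : ℝ) / 4 + b / 8) * deriv digamma (b / 2 + p + 1) := by
  have hb2 : (0:ℝ) < b / 2 := by linarith
  have hinner : ∀ i ∈ Finset.Icc 1 p,
      (∑' k : ℕ, 1 / (2 * ((i : ℝ) + (k : ℝ)) + b) ^ 2)
        = (1/4) * deriv digamma (b / 2 + (i:ℝ)) := by
    intro i hi
    have hxi : (0:ℝ) < b / 2 + (i:ℝ) := by positivity
    rw [trigamma_eq hxi]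
    rw [← tsum_mul_left]
    apply tsum_congr
    intro k
    have hne : (b / 2 + (i:ℝ)) + (k:ℝ) ≠ 0 := by positivity
    have h2 : (2 * ((i : ℝ) + (k : ℝ)) + b) ^ 2 = 4 * ((b / 2 + (i:ℝ)) + (k:ℝ)) ^ 2 := by ring
    rw [h2]
    field_simp
  rw [Finset.sum_congr rfl hinner, ← Finset.mul_sum, key_sum hb2 p]
  ring
end

section
/- For every real a > 0 and all integers k, m ≥ 2, one has |(1/2^{m+1}) Σ_{j=1}^k ψ^(m)((j+a)/2)| ≤ 4·m!/(a+1)^{m-1}. -/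
open Filter Topology Finset Real

namespace Pg

/-- The auxiliary series `∑ 1/(x+n)^p`. -/
noncomputable def S (p : ℕ) (x : ℝ) : ℝ := ∑' n : ℕ, ((x + n) ^ p)⁻¹

/-- The digamma function as an explicit series. -/
noncomputable def L (y : ℝ) : ℝ :=
  -Real.eulerMascheroniConstant + ∑' n : ℕ, (((n : ℝ) + 1)⁻¹ - (y + n)⁻¹)

lemma base_summable : Summable (fun n : ℕ => (((n : ℝ) + 1) ^ 2)⁻¹) := by
  have h := Real.summable_one_div_nat_pow.mpr (le_refl 2)
  rw [← summable_nat_add_iff 1] at h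
  simpa [one_div] using h

lemma summable_S {x : ℝ} (hx : 0 < x) {p : ℕ} (hp : 2 ≤ p) :
    Summable (fun n : ℕ => ((x + n) ^ p)⁻¹) := by
  rw [← summable_nat_add_iff 1]
  refine base_summable.of_nonneg_of_le (fun n => by positivity) (fun n => ?_)
  have h1 : (0:ℝ) < (n : ℝ) + 1 := by positivity
  have h2 : ((n : ℝ) + 1) ^ 2 ≤ ((n : ℝ) + 1) ^ p := by
    apply pow_le_pow_right₀ (by linarith) hp
  have h3 : ((n : ℝ) + 1) ^ p ≤ (x + ((n : ℕ) + 1 : ℕ)) ^ p := by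
    apply pow_le_pow_left₀ (by linarith)
    push_cast; linarith
  exact inv_anti₀ (by positivity) (h2.trans h3)

lemma S_nonneg {x : ℝ} (hx : 0 < x) (p : ℕ) : 0 ≤ S p x := by
  refine tsum_nonneg (fun n => ?_)
  have : (0:ℝ) < x + n := by positivity
  positivity

lemma S_le {c : ℝ} (hc : 0 < c) {p : ℕ} (hp : 2 ≤ p) :
    S p c ≤ (c ^ p)⁻¹ + (c ^ (p - 1))⁻¹ := by
  have hsum : Summable (fun n : ℕ => ((c + n) ^ p)⁻¹) := summable_S hc hp
  obtain ⟨q, rfl⟩ : ∃ q, p = q + 2 := ⟨p - 2, by omega⟩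
  have key : ∀ N : ℕ, ∑ i ∈ range N, ((c + (i + 1 : ℕ)) ^ (q + 2))⁻¹ ≤ (c ^ (q + 1))⁻¹ := by
    intro N
    have step : ∀ i : ℕ, ((c + (i + 1 : ℕ)) ^ (q + 2))⁻¹
        ≤ (c ^ q)⁻¹ * ((c + i)⁻¹ - (c + (i+1))⁻¹) := by
      intro i
      have h0 : (0:ℝ) < c + i := by positivity
      have h1 : (0:ℝ) < c + i + 1 := by linarith
      have e : (c + i)⁻¹ - (c + (i+1))⁻¹ = ((c + i) * (c + i + 1))⁻¹ := by
        rw [show c + ((i:ℝ)+1) = c + i + 1 by ring, inv_sub_inv h0.ne' h1.ne',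
          show c + (i:ℝ) + 1 - (c + i) = 1 by ring, one_div]
      rw [e, ← mul_inv]
      have hle : c ^ q * ((c + i) * (c + i + 1)) ≤ (c + (i + 1 : ℕ)) ^ (q + 2) := by
        push_cast
        have hcq : c ^ q ≤ (c + i + 1) ^ q := by
          apply pow_le_pow_left₀ hc.le (by linarith)
        calc c ^ q * ((c + i) * (c + i + 1))
            ≤ (c + i + 1) ^ q * ((c + i + 1) * (c + i + 1)) := by
              apply mul_le_mul hcq ?_ (by positivity) (by positivity)
              apply mul_le_mul (by linarith) le_rfl h1.le (by linarith)
          _ = (c + (i + 1)) ^ (q + 2) := by ring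
      push_cast at hle ⊢
      apply inv_anti₀ (by positivity) hle
    calc ∑ i ∈ range N, ((c + (i + 1 : ℕ)) ^ (q + 2))⁻¹
        ≤ ∑ i ∈ range N, (c ^ q)⁻¹ * ((c + i)⁻¹ - (c + (i+1))⁻¹) :=
          Finset.sum_le_sum (fun i _ => step i)
      _ = (c ^ q)⁻¹ * ∑ i ∈ range N,
            ((fun j : ℕ => (c + j)⁻¹) i - (fun j : ℕ => (c + j)⁻¹) (i+1)) := by
          rw [← Finset.mul_sum]
          congr 1
          apply Finset.sum_congr rfl
          intro i _
          push_cast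
          ring
      _ = (c ^ q)⁻¹ * ((c + (0:ℕ))⁻¹ - (c + (N:ℕ))⁻¹) := by rw [Finset.sum_range_sub']
      _ ≤ (c ^ q)⁻¹ * c⁻¹ := by
          apply mul_le_mul_of_nonneg_left ?_ (by positivity)
          have : (0:ℝ) ≤ (c + (N:ℕ))⁻¹ := by positivity
          simp only [Nat.cast_zero, add_zero]
          linarith
      _ = (c ^ (q + 1))⁻¹ := by rw [pow_succ, mul_inv]
  have h0 : S (q+2) c = (c ^ (q+2))⁻¹ + ∑' n : ℕ, ((c + (n + 1 : ℕ)) ^ (q + 2))⁻¹ := by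
    rw [S, Summable.tsum_eq_zero_add hsum]
    push_cast
    norm_num
  rw [h0]
  have tail : ∑' n : ℕ, ((c + (n + 1 : ℕ)) ^ (q + 2))⁻¹ ≤ (c ^ (q+1))⁻¹ :=
    Real.tsum_le_of_sum_range_le (fun n => by positivity) key
  have hqq : q + 2 - 1 = q + 1 := rfl
  rw [hqq]
  linarith

lemma hasDerivAt_term (n p : ℕ) {y : ℝ} (hy : 0 < y + n) :
    HasDerivAt (fun z : ℝ => ((z + n) ^ p)⁻¹) (-(p : ℝ) * ((y + n) ^ (p + 1))⁻¹) y := by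
  have h := (hasDerivAt_zpow (-(p:ℤ)) (y + n) (Or.inl hy.ne')).comp y
    ((hasDerivAt_id y).add_const (n : ℝ))
  have hval : ((-(p:ℤ) : ℤ) : ℝ) * (y + n) ^ (-(p:ℤ) - 1) * 1
      = -(p : ℝ) * ((y + n) ^ (p + 1))⁻¹ := by
    rw [mul_one, show -(p:ℤ) - 1 = -((p+1 : ℕ) : ℤ) by push_cast; ring, zpow_neg, zpow_natCast]
    push_cast
    ring
  rw [← hval]
  refine h.congr_of_eventuallyEq (Filter.Eventually.of_forall fun z => ?_)
  simp [Function.comp, zpow_neg, zpow_natCast]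

lemma hasDerivAt_S {p : ℕ} (hp : 2 ≤ p) {x : ℝ} (hx : 0 < x) :
    HasDerivAt (S p) (-(p : ℝ) * S (p + 1) x) x := by
  set s : Set ℝ := Set.Ioo (x / 2) (x + 1) with hs_def
  have hso : IsOpen s := isOpen_Ioo
  have hxs : x ∈ s := by constructor <;> [linarith; linarith]
  have hx2 : (0:ℝ) < x / 2 := by linarith
  have hspos : ∀ y ∈ s, 0 < y := fun y hy => lt_trans hx2 hy.1
  have hu : Summable (fun n : ℕ => (p : ℝ) * ((x / 2 + n) ^ (p + 1))⁻¹) :=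
    (summable_S hx2 (by omega)).mul_left _
  have hb : ∀ (n : ℕ) (y : ℝ), y ∈ s →
      ‖-(p : ℝ) * ((y + n) ^ (p + 1))⁻¹‖ ≤ (p : ℝ) * ((x / 2 + n) ^ (p + 1))⁻¹ := by
    intro n y hy
    have h1 : (0:ℝ) < x / 2 + n := by positivity
    have h2 : (0:ℝ) < y + n := by have := hspos y hy; positivity
    rw [norm_mul, norm_neg, norm_inv, Real.norm_natCast, norm_pow, Real.norm_eq_abs,
      abs_of_pos h2]
    apply mul_le_mul_of_nonneg_left ?_ (Nat.cast_nonneg p)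
    apply inv_anti₀ (by positivity)
    apply pow_le_pow_left₀ h1.le
    linarith [hy.1]
  have hf' : TendstoUniformlyOn
      (fun (N : ℕ) (y : ℝ) => ∑ n ∈ range N, (-(p : ℝ) * ((y + n) ^ (p + 1))⁻¹))
      (fun y => -(p : ℝ) * S (p + 1) y) atTop s := by
    have := tendstoUniformlyOn_tsum_nat
      (f := fun (n : ℕ) (y : ℝ) => -(p : ℝ) * ((y + n) ^ (p + 1))⁻¹) hu hb
    convert this using 2 with y
    rw [S, tsum_mul_left]
  refine hasDerivAt_of_tendstoUniformlyOn
    (f := fun (N : ℕ) (y : ℝ) => ∑ n ∈ range N, ((y + n) ^ p)⁻¹) hso hf' ?_ ?_ hxs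
  · filter_upwards with N y hy
    apply HasDerivAt.fun_sum
    intro n _
    exact hasDerivAt_term n p (by have := hspos y hy; positivity)
  · intro y hy
    exact ((summable_S (hspos y hy) hp).hasSum.tendsto_sum_nat)

lemma abs_W_term {y : ℝ} (hy : 0 < y) (n : ℕ) :
    |(((n : ℝ) + 1)⁻¹ - (y + n)⁻¹)| = |y - 1| * ((((n : ℝ) + 1) * (y + n)))⁻¹ := by
  have h1 : (0:ℝ) < (n : ℝ) + 1 := by positivity
  have h2 : (0:ℝ) < y + n := by positivity
  rw [inv_sub_inv h1.ne' h2.ne', show y + (n:ℝ) - ((n:ℝ) + 1) = y - 1 by ring, abs_div,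
    abs_of_pos (mul_pos h1 h2), div_eq_mul_inv]

lemma summable_W {y : ℝ} (hy : 0 < y) :
    Summable (fun n : ℕ => (((n : ℝ) + 1)⁻¹ - (y + n)⁻¹)) := by
  apply Summable.of_abs
  rw [← summable_nat_add_iff 1]
  refine Summable.of_nonneg_of_le (fun n => abs_nonneg _) (fun n => ?_)
    (base_summable.mul_left |y - 1|)
  rw [abs_W_term hy (n + 1)]
  apply mul_le_mul_of_nonneg_left ?_ (abs_nonneg _)
  apply inv_anti₀ (by positivity)
  push_cast
  have h1 : (0:ℝ) ≤ (n:ℝ) + 1 := by positivity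
  nlinarith [hy, h1]

lemma tendsto_c : Tendsto (fun N : ℕ => Real.log N - (harmonic (N + 1) : ℝ)) atTop
    (𝓝 (-Real.eulerMascheroniConstant)) := by
  have h1 := (Real.tendsto_eulerMascheroniSeq'.comp (tendsto_add_atTop_nat 1)).neg
  have h2 := Real.tendsto_log_nat_add_one_sub_log
  have key : (fun N : ℕ => -(Real.eulerMascheroniSeq' (N + 1)) - (Real.log (N + 1) - Real.log N))
      = fun N : ℕ => Real.log N - (harmonic (N + 1) : ℝ) := by
    funext N
    rw [Real.eulerMascheroniSeq', if_neg (Nat.succ_ne_zero N)]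
    push_cast
    ring
  rw [← key]
  simpa using h1.sub h2

lemma harmonic_cast (N : ℕ) :
    (harmonic (N + 1) : ℝ) = ∑ n ∈ range (N + 1), ((n : ℝ) + 1)⁻¹ := by
  rw [harmonic]
  push_cast
  rfl

lemma G_eq (N : ℕ) (y : ℝ) :
    Real.log N - ∑ n ∈ range (N + 1), (y + n)⁻¹
      = (Real.log N - (harmonic (N + 1) : ℝ))
        + ∑ n ∈ range (N + 1), (((n : ℝ) + 1)⁻¹ - (y + n)⁻¹) := by
  rw [Finset.sum_sub_distrib, harmonic_cast]
  ring

lemma hasDerivAt_logGamma {x : ℝ} (hx : 0 < x) :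
    HasDerivAt (fun y => Real.log (Real.Gamma y)) (L x) x := by
  set s : Set ℝ := Set.Ioo (x / 2) (x + 1) with hs_def
  have hso : IsOpen s := isOpen_Ioo
  have hxs : x ∈ s := by constructor <;> [linarith; linarith]
  have hx2 : (0:ℝ) < x / 2 := by linarith
  have hspos : ∀ y ∈ s, 0 < y := fun y hy => lt_trans hx2 hy.1
  refine hasDerivAt_of_tendstoUniformlyOn (l := atTop)
    (f := fun (N : ℕ) (y : ℝ) => Real.BohrMollerup.logGammaSeq y N)
    (f' := fun (N : ℕ) (y : ℝ) => Real.log N - ∑ n ∈ range (N + 1), (y + n)⁻¹)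
    hso ?_ ?_ ?_ hxs
  · -- uniform convergence of derivatives to L
    have const_tu : TendstoUniformlyOn
        (fun (N : ℕ) (_ : ℝ) => Real.log N - (harmonic (N + 1) : ℝ))
        (fun _ => -Real.eulerMascheroniConstant) atTop s := by
      rw [Metric.tendstoUniformlyOn_iff]
      intro ε hε
      filter_upwards [Metric.tendsto_nhds.mp tendsto_c ε hε] with N h y _
      simpa [dist_comm] using h
    have hu : Summable (fun n : ℕ => (x + 2) * ((((n : ℝ) + 1) * (x / 2 + n)))⁻¹) := by
      apply Summable.mul_left
      rw [← summable_nat_add_iff 1]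
      refine Summable.of_nonneg_of_le (fun n => by positivity) (fun n => ?_) base_summable
      apply inv_anti₀ (by positivity)
      push_cast
      have h1 : (0:ℝ) ≤ (n:ℝ) + 1 := by positivity
      nlinarith [hx2, h1]
    have hb : ∀ (n : ℕ) (y : ℝ), y ∈ s →
        ‖(((n : ℝ) + 1)⁻¹ - (y + n)⁻¹)‖ ≤ (x + 2) * ((((n : ℝ) + 1) * (x / 2 + n)))⁻¹ := by
      intro n y hy
      have hy0 : 0 < y := hspos y hy
      rw [Real.norm_eq_abs, abs_W_term hy0 n]
      have h1 : (0:ℝ) < (n : ℝ) + 1 := by positivity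
      have hyx : |y - 1| ≤ x + 2 := by
        rw [abs_le]
        constructor <;> [nlinarith [hy.1, hy.2]; nlinarith [hy.1, hy.2]]
      apply mul_le_mul hyx ?_ (by positivity) (by positivity)
      apply inv_anti₀ (by positivity)
      apply mul_le_mul le_rfl ?_ (by positivity) (by positivity)
      have := hy.1
      linarith
    have W0 := tendstoUniformlyOn_tsum_nat hu hb
    have W_tu : TendstoUniformlyOn
        (fun (N : ℕ) (y : ℝ) => ∑ n ∈ range (N + 1), (((n : ℝ) + 1)⁻¹ - (y + n)⁻¹))
        (fun y => ∑' n : ℕ, (((n : ℝ) + 1)⁻¹ - (y + n)⁻¹)) atTop s :=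
      fun v hv => (tendsto_add_atTop_nat 1).eventually (W0 v hv)
    have hadd := const_tu.add W_tu
    have heq : ((fun _ : ℝ => -Real.eulerMascheroniConstant)
        + fun y : ℝ => ∑' n : ℕ, (((n : ℝ) + 1)⁻¹ - (y + n)⁻¹)) = L := by
      funext y
      simp [L]
    rw [heq] at hadd
    apply hadd.congr
    filter_upwards with N
    intro y hy
    simp only [Pi.add_apply]
    exact (G_eq N y).symm
  · filter_upwards with N
    intro y hy
    have hy0 : 0 < y := hspos y hy
    have hA : HasDerivAt (fun z : ℝ => z * Real.log N + Real.log (Nat.factorial N))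
        (Real.log N) y := (hasDerivAt_mul_const _).add_const _
    have hB : HasDerivAt (fun z : ℝ => ∑ n ∈ range (N + 1), Real.log (z + n))
        (∑ n ∈ range (N + 1), (y + n)⁻¹) y := by
      apply HasDerivAt.fun_sum
      intro n _
      have h2 : (0:ℝ) < y + n := by positivity
      have := (Real.hasDerivAt_log h2.ne').comp y ((hasDerivAt_id y).add_const (n : ℝ))
      simpa [Function.comp_def] using this
    exact hA.sub hB
  · intro y hy
    exact Real.BohrMollerup.tendsto_log_gamma (hspos y hy)

lemma hasDerivAt_L {x : ℝ} (hx : 0 < x) : HasDerivAt L (S 2 x) x := by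
  set s : Set ℝ := Set.Ioo (x / 2) (x + 1) with hs_def
  have hso : IsOpen s := isOpen_Ioo
  have hxs : x ∈ s := by constructor <;> [linarith; linarith]
  have hx2 : (0:ℝ) < x / 2 := by linarith
  have hspos : ∀ y ∈ s, 0 < y := fun y hy => lt_trans hx2 hy.1
  refine hasDerivAt_of_tendstoUniformlyOn (l := atTop)
    (f := fun (N : ℕ) (y : ℝ) => -Real.eulerMascheroniConstant
      + ∑ n ∈ range N, (((n : ℝ) + 1)⁻¹ - (y + n)⁻¹))
    (f' := fun (N : ℕ) (y : ℝ) => ∑ n ∈ range N, ((y + n) ^ 2)⁻¹)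
    (g := L) (g' := fun y => S 2 y) hso ?_ ?_ ?_ hxs
  · have hu : Summable (fun n : ℕ => ((x / 2 + n) ^ 2)⁻¹) := summable_S hx2 le_rfl
    have hb : ∀ (n : ℕ) (y : ℝ), y ∈ s → ‖((y + n) ^ 2)⁻¹‖ ≤ ((x / 2 + n) ^ 2)⁻¹ := by
      intro n y hy
      have hy0 : 0 < y := hspos y hy
      have h2 : (0:ℝ) < y + n := by positivity
      rw [Real.norm_eq_abs, abs_of_pos (by positivity)]
      apply inv_anti₀ (by positivity)
      apply pow_le_pow_left₀ (by positivity)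
      linarith [hy.1]
    exact tendstoUniformlyOn_tsum_nat hu hb
  · filter_upwards with N
    intro y hy
    have hy0 : 0 < y := hspos y hy
    apply HasDerivAt.const_add
    apply HasDerivAt.fun_sum
    intro n _
    have h2 : (0:ℝ) < y + n := by positivity
    have := (hasDerivAt_term n 1 h2).const_sub (((n : ℝ) + 1)⁻¹)
    simpa using this
  · intro y hy
    have hy0 : 0 < y := hspos y hy
    exact tendsto_const_nhds.add (summable_W hy0).hasSum.tendsto_sum_nat

end Pg

namespace Pg

lemma digamma_eq {x : ℝ} (hx : 0 < x) : digamma x = L x :=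
  (hasDerivAt_logGamma hx).deriv

lemma iteratedDeriv_digamma (m : ℕ) (hm : 1 ≤ m) :
    ∀ x : ℝ, 0 < x →
      iteratedDeriv m digamma x = (-1) ^ (m + 1) * (Nat.factorial m : ℝ) * S (m + 1) x := by
  induction m, hm using Nat.le_induction with
  | base =>
    intro x hx
    rw [iteratedDeriv_one]
    have hev : digamma =ᶠ[𝓝 x] L := by
      filter_upwards [isOpen_Ioi.mem_nhds hx] with y hy
      exact digamma_eq hy
    have hd : HasDerivAt digamma (S 2 x) x := (hasDerivAt_L hx).congr_of_eventuallyEq hev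
    rw [hd.deriv]
    norm_num
  | succ m hm IH =>
    intro x hx
    rw [iteratedDeriv_succ]
    have hev : iteratedDeriv m digamma =ᶠ[𝓝 x]
        (fun y => (-1 : ℝ) ^ (m + 1) * (Nat.factorial m : ℝ) * S (m + 1) y) := by
      filter_upwards [isOpen_Ioi.mem_nhds hx] with y hy
      exact IH y hy
    have hd : HasDerivAt (fun y => (-1 : ℝ) ^ (m + 1) * (Nat.factorial m : ℝ) * S (m + 1) y)
        (((-1 : ℝ) ^ (m + 1) * (Nat.factorial m : ℝ)) * (-((m + 1 : ℕ) : ℝ) * S (m + 1 + 1) x))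
        x := (hasDerivAt_S (by omega) hx).const_mul _
    have hd2 := hd.congr_of_eventuallyEq hev
    rw [hd2.deriv, Nat.factorial_succ]
    push_cast
    ring

end Pg

/-- Bound on sums of polygamma functions `ψ^(m) = iteratedDeriv m digamma`. -/
theorem polygamma_sum_bound (a : ℝ) (ha : 0 < a) (k m : ℕ) (hk : 2 ≤ k) (hm : 2 ≤ m) :
    |(1 / 2 ^ (m + 1)) * ∑ j ∈ Finset.Icc 1 k, iteratedDeriv m digamma (((j : ℝ) + a) / 2)|
      ≤ 4 * (Nat.factorial m) / (a + 1) ^ (m - 1) := by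
  have ha1 : (1:ℝ) ≤ a + 1 := by linarith
  have hfac : (0:ℝ) < (Nat.factorial m : ℝ) := by exact_mod_cast Nat.factorial_pos m
  have hb : ∀ j ∈ Finset.Icc 1 k, (1:ℝ) ≤ (j : ℝ) + a := by
    intro j hj
    have : 1 ≤ j := (Finset.mem_Icc.mp hj).1
    have : (1:ℝ) ≤ (j:ℝ) := by exact_mod_cast this
    linarith
  have hcpos : ∀ j ∈ Finset.Icc 1 k, (0:ℝ) < ((j : ℝ) + a) / 2 := by
    intro j hj
    have := hb j hj
    linarith
  -- step 1: per-term bound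
  have hterm : ∀ j ∈ Finset.Icc 1 k, |iteratedDeriv m digamma (((j : ℝ) + a) / 2)|
      ≤ (Nat.factorial m : ℝ) * (2 ^ (m + 2) * ((((j : ℝ) + a)) ^ m)⁻¹) := by
    intro j hj
    have hc := hcpos j hj
    have hbj := hb j hj
    rw [Pg.iteratedDeriv_digamma m (by omega) _ hc, abs_mul, abs_mul, abs_pow, abs_neg, abs_one,
      one_pow, one_mul, Nat.abs_cast, abs_of_nonneg (Pg.S_nonneg hc (m+1))]
    apply mul_le_mul_of_nonneg_left ?_ hfac.le
    have h1 : Pg.S (m+1) (((j : ℝ) + a) / 2)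
        ≤ ((((j : ℝ) + a) / 2) ^ (m+1))⁻¹ + ((((j : ℝ) + a) / 2) ^ m)⁻¹ := by
      have := Pg.S_le hc (p := m + 1) (by omega)
      simpa using this
    refine h1.trans ?_
    have e1 : ((((j : ℝ) + a) / 2) ^ (m+1))⁻¹ = 2 ^ (m+1) * (((j : ℝ) + a) ^ (m+1))⁻¹ := by
      rw [div_pow, inv_div, div_eq_mul_inv]
    have e2 : ((((j : ℝ) + a) / 2) ^ m)⁻¹ = 2 ^ m * (((j : ℝ) + a) ^ m)⁻¹ := by
      rw [div_pow, inv_div, div_eq_mul_inv]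
    rw [e1, e2]
    have h2 : (((j : ℝ) + a) ^ (m+1))⁻¹ ≤ (((j : ℝ) + a) ^ m)⁻¹ := by
      apply inv_anti₀ (by positivity)
      apply pow_le_pow_right₀ hbj (by omega)
    have h3 : (0:ℝ) ≤ (((j : ℝ) + a) ^ m)⁻¹ := by positivity
    have h4 : (2:ℝ) ^ m ≤ 2 ^ (m+1) := by
      apply pow_le_pow_right₀ (by norm_num) (by omega)
    have h5 : (2:ℝ)^(m+1) * (((j : ℝ) + a) ^ (m+1))⁻¹ ≤ 2^(m+1) * (((j : ℝ) + a) ^ m)⁻¹ := by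
      apply mul_le_mul_of_nonneg_left h2 (by positivity)
    have h6 : (2:ℝ)^m * (((j : ℝ) + a) ^ m)⁻¹ ≤ 2^(m+1) * (((j : ℝ) + a) ^ m)⁻¹ := by
      apply mul_le_mul_of_nonneg_right h4 h3
    have : (2:ℝ)^(m+2) = 2^(m+1) + 2^(m+1) := by ring
    rw [this, add_mul]
    linarith
  -- step 2: sum bound
  have hsum_le : ∑ j ∈ Finset.Icc 1 k, (((j : ℝ) + a) ^ m)⁻¹ ≤ Pg.S m (a + 1) := by
    have e : ∑ j ∈ Finset.Icc 1 k, (((j : ℝ) + a) ^ m)⁻¹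
        = ∑ i ∈ Finset.range k, (((a + 1) + (i : ℝ)) ^ m)⁻¹ := by
      rw [← Finset.Ico_add_one_right_eq_Icc, Finset.sum_Ico_eq_sum_range]
      apply Finset.sum_congr rfl
      intro i _
      push_cast
      ring_nf
    rw [e]
    exact Summable.sum_le_tsum (Finset.range k) (fun i _ => by positivity)
      (Pg.summable_S (by linarith) hm)
  have hS : Pg.S m (a + 1) ≤ 2 * ((a + 1) ^ (m - 1))⁻¹ := by
    have h1 := Pg.S_le (by linarith : (0:ℝ) < a + 1) hm
    have h2 : ((a + 1) ^ m)⁻¹ ≤ ((a + 1) ^ (m - 1))⁻¹ := by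
      apply inv_anti₀ (by positivity)
      apply pow_le_pow_right₀ ha1 (by omega)
    linarith
  -- assemble
  have habs : |(1 / 2 ^ (m + 1) : ℝ) * ∑ j ∈ Finset.Icc 1 k,
        iteratedDeriv m digamma (((j : ℝ) + a) / 2)|
      ≤ (1 / 2 ^ (m + 1) : ℝ) * ∑ j ∈ Finset.Icc 1 k,
        (Nat.factorial m : ℝ) * (2 ^ (m + 2) * ((((j : ℝ) + a)) ^ m)⁻¹) := by
    rw [abs_mul]
    apply mul_le_mul ?_ ?_ (abs_nonneg _) (by positivity)
    · rw [abs_of_pos (by positivity)]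
    · exact (Finset.abs_sum_le_sum_abs _ _).trans (Finset.sum_le_sum hterm)
  refine habs.trans ?_
  have e3 : (1 / 2 ^ (m + 1) : ℝ) * ∑ j ∈ Finset.Icc 1 k,
        (Nat.factorial m : ℝ) * (2 ^ (m + 2) * ((((j : ℝ) + a)) ^ m)⁻¹)
      = 2 * (Nat.factorial m : ℝ) * ∑ j ∈ Finset.Icc 1 k, (((j : ℝ) + a) ^ m)⁻¹ := by
    rw [← Finset.mul_sum, ← Finset.mul_sum, ← mul_assoc, ← mul_assoc]
    congr 1
    have h2 : (2:ℝ) ^ (m+1) ≠ 0 := by positivity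
    field_simp
    ring
  rw [e3]
  calc 2 * (Nat.factorial m : ℝ) * ∑ j ∈ Finset.Icc 1 k, (((j : ℝ) + a) ^ m)⁻¹
      ≤ 2 * (Nat.factorial m : ℝ) * (2 * ((a + 1) ^ (m - 1))⁻¹) := by
        apply mul_le_mul_of_nonneg_left (hsum_le.trans hS) (by positivity)
    _ = 4 * (Nat.factorial m : ℝ) / (a + 1) ^ (m - 1) := by
        rw [div_eq_mul_inv]
        ring
end
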